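/- Let A = D² + M_{X³+α} acting on smooth real functions (or formal differential operators), with α a real constant, and let L = A² + 2·M_X and M = A³ + 3·M_X∘D² + 3·D + 3·M_{X(X³+α)}. Then L and M commute: L∘M = M∘L. -/

import Mathlib

open Polynomial


private lemma mop_mul (f g : ℝ[X]) :
    LinearMap.mulLeft ℝ f * LinearMap.mulLeft ℝ g = LinearMap.mulLeft ℝ (f * g) := by
  ext p
  simp [Module.End.mul_apply, mul_assoc]

private lemma mop_comm (f g : ℝ[X]) :
    LinearMap.mulLeft ℝ f * LinearMap.mulLeft ℝ g
      = LinearMap.mulLeft ℝ g * LinearMap.mulLeft ℝ f := by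
  rw [mop_mul, mop_mul, mul_comm]

private lemma dmop (f : ℝ[X]) :
    (Polynomial.derivative : Module.End ℝ ℝ[X]) * LinearMap.mulLeft ℝ f
      = LinearMap.mulLeft ℝ f * (Polynomial.derivative : Module.End ℝ ℝ[X])
        + LinearMap.mulLeft ℝ (derivative f) := by
  ext p
  simp [Module.End.mul_apply, derivative_mul]
  ring

private lemma key {R : Type*} [Ring R] (a x d t : R)
    (hax : a*x = x*a + 2*d) (had : a*d = d*a - t)
    (hat : a*t = t*a + 12*(x*d) + 6) (hdx : d*x = x*d + 1) :
    (a^2 + 2*x) * (a^3 + 3*(x*a + d)) = (a^3 + 3*(x*a + d)) * (a^2 + 2*x) := by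
  have h1 : a*(a*x) = x*(a*a) + 4*(d*a) - 2*t := by
    calc a*(a*x) = a*(x*a + 2*d) := by rw [hax]
      _ = (a*x)*a + 2*(a*d) := by noncomm_ring
      _ = (x*a + 2*d)*a + 2*(d*a - t) := by rw [hax, had]
      _ = x*(a*a) + 4*(d*a) - 2*t := by noncomm_ring
  have T1 : a*(a*(x*a)) = x*(a*(a*a)) + 4*(d*(a*a)) - 2*(t*a) := by
    calc a*(a*(x*a)) = (a*(a*x))*a := by noncomm_ring
      _ = (x*(a*a) + 4*(d*a) - 2*t)*a := by rw [h1]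
      _ = x*(a*(a*a)) + 4*(d*(a*a)) - 2*(t*a) := by noncomm_ring
  have T2 : a*(a*d) = d*(a*a) - 2*(t*a) - 12*(x*d) - 6 := by
    calc a*(a*d) = a*(d*a - t) := by rw [had]
      _ = (a*d)*a - a*t := by noncomm_ring
      _ = (d*a - t)*a - (t*a + 12*(x*d) + 6) := by rw [had, hat]
      _ = d*(a*a) - 2*(t*a) - 12*(x*d) - 6 := by noncomm_ring
  have T3 : a*(a*(a*x)) = x*(a*(a*a)) + 6*(d*(a*a)) - 6*(t*a) - 24*(x*d) - 12 := by
    calc a*(a*(a*x)) = a*(a*(x*a + 2*d)) := by rw [hax]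
      _ = a*(a*(x*a)) + 2*(a*(a*d)) := by noncomm_ring
      _ = (x*(a*(a*a)) + 4*(d*(a*a)) - 2*(t*a))
            + 2*(d*(a*a) - 2*(t*a) - 12*(x*d) - 6) := by rw [T1, T2]
      _ = x*(a*(a*a)) + 6*(d*(a*a)) - 6*(t*a) - 24*(x*d) - 12 := by noncomm_ring; norm_num
  have T4 : x*(a*x) = x*(x*a) + 2*(x*d) := by
    calc x*(a*x) = x*(x*a + 2*d) := by rw [hax]
      _ = x*(x*a) + 2*(x*d) := by noncomm_ring
  have expand : (a^2 + 2*x) * (a^3 + 3*(x*a + d)) - (a^3 + 3*(x*a + d)) * (a^2 + 2*x)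
      = 3*(a*(a*(x*a))) + 3*(a*(a*d)) - x*(a*(a*a)) - 3*(d*(a*a))
        - 2*(a*(a*(a*x))) + 6*(x*(x*a)) + 6*(x*d) - 6*(x*(a*x)) - 6*(d*x) := by
    noncomm_ring
  rw [T1, T2, T3, T4, hdx] at expand
  have h0 : (a^2 + 2*x) * (a^3 + 3*(x*a + d)) - (a^3 + 3*(x*a + d)) * (a^2 + 2*x) = 0 := by
    rw [expand]; noncomm_ring; norm_num
  exact sub_eq_zero.mp h0

private lemma key0 {R : Type*} [Ring R] (d x b t : R)
    (hdx : d*x = x*d + 1) (hdb : d*b = b*d + t) (hdt : d*t = t*d + 6*x)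
    (hxb : x*b = b*x) (hbt : b*t = t*b) :
    ((d^2+b)^2 + 2*x) * ((d^2+b)^3 + 3*(x*(d^2+b) + d))
      = ((d^2+b)^3 + 3*(x*(d^2+b) + d)) * ((d^2+b)^2 + 2*x) := by
  have hax : (d^2+b)*x = x*(d^2+b) + 2*d := by
    have h2x : d*(d*x) = x*(d*d) + 2*d := by
      calc d*(d*x) = d*(x*d + 1) := by rw [hdx]
        _ = (d*x)*d + d := by noncomm_ring
        _ = (x*d + 1)*d + d := by rw [hdx]
        _ = x*(d*d) + 2*d := by noncomm_ring
    calc (d^2+b)*x = d*(d*x) + b*x := by noncomm_ring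
      _ = (x*(d*d) + 2*d) + b*x := by rw [h2x]
      _ = (x*(d*d) + 2*d) + x*b := by rw [hxb]
      _ = x*(d^2+b) + 2*d := by noncomm_ring
  have had : (d^2+b)*d = d*(d^2+b) - t := by
    calc (d^2+b)*d = d*(d*d) + b*d := by noncomm_ring
      _ = d*(d*d) + (d*b - t) := by rw [hdb]; noncomm_ring
      _ = d*(d^2+b) - t := by noncomm_ring
  have hat : (d^2+b)*t = t*(d^2+b) + 12*(x*d) + 6 := by
    have h2t : d*(d*t) = t*(d*d) + 12*(x*d) + 6 := by
      calc d*(d*t) = d*(t*d + 6*x) := by rw [hdt]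
        _ = (d*t)*d + 6*(d*x) := by noncomm_ring
        _ = (t*d + 6*x)*d + 6*(x*d + 1) := by rw [hdt, hdx]
        _ = t*(d*d) + 12*(x*d) + 6 := by noncomm_ring; norm_num
    calc (d^2+b)*t = d*(d*t) + b*t := by noncomm_ring
      _ = (t*(d*d) + 12*(x*d) + 6) + t*b := by rw [h2t, hbt]
      _ = t*(d^2+b) + 12*(x*d) + 6 := by noncomm_ring
  exact key (d^2+b) x d t hax had hat hdx

private lemma dix_main (α : ℝ) :
    (((Polynomial.derivative : Module.End ℝ ℝ[X])^2
        + LinearMap.mulLeft ℝ ((X : ℝ[X])^3 + C α))^2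
      + 2 * LinearMap.mulLeft ℝ (X : ℝ[X]))
    * (((Polynomial.derivative : Module.End ℝ ℝ[X])^2
        + LinearMap.mulLeft ℝ ((X : ℝ[X])^3 + C α))^3
      + 3 * (LinearMap.mulLeft ℝ (X : ℝ[X])
          * ((Polynomial.derivative : Module.End ℝ ℝ[X])^2
            + LinearMap.mulLeft ℝ ((X : ℝ[X])^3 + C α))
        + (Polynomial.derivative : Module.End ℝ ℝ[X])))
    = (((Polynomial.derivative : Module.End ℝ ℝ[X])^2
        + LinearMap.mulLeft ℝ ((X : ℝ[X])^3 + C α))^3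
      + 3 * (LinearMap.mulLeft ℝ (X : ℝ[X])
          * ((Polynomial.derivative : Module.End ℝ ℝ[X])^2
            + LinearMap.mulLeft ℝ ((X : ℝ[X])^3 + C α))
        + (Polynomial.derivative : Module.End ℝ ℝ[X])))
    * (((Polynomial.derivative : Module.End ℝ ℝ[X])^2
        + LinearMap.mulLeft ℝ ((X : ℝ[X])^3 + C α))^2
      + 2 * LinearMap.mulLeft ℝ (X : ℝ[X])) := by
  have hdx : (Polynomial.derivative : Module.End ℝ ℝ[X]) * LinearMap.mulLeft ℝ (X : ℝ[X])
      = LinearMap.mulLeft ℝ (X : ℝ[X]) * (Polynomial.derivative : Module.End ℝ ℝ[X]) + 1 := by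
    have h := dmop (X : ℝ[X])
    simpa [Module.End.one_eq_id] using h
  have hdb := dmop ((X : ℝ[X])^3 + C α)
  have hdt' := dmop (derivative ((X : ℝ[X])^3 + C α))
  have hpoly : derivative (derivative ((X : ℝ[X])^3 + C α)) = 6 * X := by
    simp [derivative_X_pow]
    rw [show (C (2:ℝ) : ℝ[X]) = 2 from map_ofNat C 2]
    ring
  have hst : LinearMap.mulLeft ℝ (derivative (derivative ((X : ℝ[X])^3 + C α)))
      = 6 * LinearMap.mulLeft ℝ (X : ℝ[X]) := by
    rw [hpoly]
    ext p
    simp [Module.End.mul_apply]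
  rw [hst] at hdt'
  have hxb := mop_comm (X : ℝ[X]) ((X : ℝ[X])^3 + C α)
  have hbt := mop_comm ((X : ℝ[X])^3 + C α) (derivative ((X : ℝ[X])^3 + C α))
  exact key0 _ _ _ _ hdx hdb hdt' hxb hbt


/-- The Dixmier operators of rank 2, genus 1 commute: with
`A = D² + M_{X³+α}`, `L = A² + 2 M_X` and `M = A³ + 3 M_X D² + 3 D + 3 M_{X(X³+α)}`,
one has `L ∘ M = M ∘ L` (as formal differential operators, i.e. endomorphisms
of `ℝ[X]` generated by differentiation and multiplication operators). -/
theorem dixmier_rank2_commute (α : ℝ) :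
    let D : Module.End ℝ ℝ[X] := Polynomial.derivative
    let MX : Module.End ℝ ℝ[X] := LinearMap.mulLeft ℝ (X : ℝ[X])
    let A : Module.End ℝ ℝ[X] := D ^ 2 + LinearMap.mulLeft ℝ ((X : ℝ[X]) ^ 3 + C α)
    let L : Module.End ℝ ℝ[X] := A ^ 2 + 2 • MX
    let M : Module.End ℝ ℝ[X] :=
      A ^ 3 + 3 • (MX * D ^ 2) + 3 • D +
        3 • LinearMap.mulLeft ℝ ((X : ℝ[X]) * ((X : ℝ[X]) ^ 3 + C α))
    L * M = M * L := by
  intro D MX A L M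
  have hM : M = A ^ 3 + 3 * (MX * A + D) := by
    show A ^ 3 + 3 • (MX * D ^ 2) + 3 • D +
        3 • LinearMap.mulLeft ℝ ((X : ℝ[X]) * ((X : ℝ[X]) ^ 3 + C α))
      = A ^ 3 + 3 * (MX * A + D)
    rw [← mop_mul]
    show A ^ 3 + 3 • (MX * D ^ 2) + 3 • D + 3 • (MX * LinearMap.mulLeft ℝ ((X : ℝ[X])^3 + C α))
      = A ^ 3 + 3 * (MX * (D ^ 2 + LinearMap.mulLeft ℝ ((X : ℝ[X])^3 + C α)) + D)
    simp only [nsmul_eq_mul, Nat.cast_ofNat]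
    noncomm_ring
  have hL : L = A ^ 2 + 2 * MX := by
    show A ^ 2 + 2 • MX = A ^ 2 + 2 * MX
    simp only [nsmul_eq_mul, Nat.cast_ofNat]
  rw [hM, hL]
  exact dix_main α
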